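/- Any code C ⊆ F_2^n × F_2^n whose distinct elements have pairwise asymmetric Lee distance (λ=1) at least 2 satisfies |C| ≤ 2^{2n−1} + 2^{n−1}. Consequently A_{λ=1}(n,2) = 2^{2n−1} + 2^{n−1}. -/

import Mathlib

open Finset

def ind (p : Prop) [Decidable p] : ℤ := if p then 1 else 0

def aldSym (lam : ℕ) (a b c d : Bool) : ℤ :=
  (1 + lam) * (ind (a = b) + ind (c = d))
    + lam * ind (a = !b ∧ !b = !c ∧ !c = d)
    - 2 * (1 + lam) * ind (a = b ∧ b = c ∧ c = d)

def ALD (lam n : ℕ) (x y : (Fin n → Bool) × (Fin n → Bool)) : ℤ :=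
  ∑ i, aldSym lam (x.1 i) (x.2 i) (y.1 i) (y.2 i)

def wt {n : ℕ} (a b : Fin n → Bool) : ℕ :=
  (Finset.univ.filter fun i => a i ≠ b i).card

/- ## Auxiliary definitions and lemmas -/

abbrev PW (n : ℕ) := (Fin n → Bool) × (Fin n → Bool)

lemma aldSym_nonneg : ∀ a b c d : Bool, 0 ≤ aldSym 1 a b c d := by decide
lemma aldSym_self : ∀ a b : Bool, aldSym 1 a b a b = 0 := by decide
lemma aldSym_pos : ∀ a b c d : Bool, ¬(a = c ∧ b = d) → 1 ≤ aldSym 1 a b c d := by decide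
lemma aldSym_cases : ∀ a b c d : Bool, aldSym 1 a b c d = 0 ∨ aldSym 1 a b c d = 1 ∨ 2 ≤ aldSym 1 a b c d := by decide
lemma aldSym_eq_one : ∀ a b c d : Bool, aldSym 1 a b c d = 1 → c = b ∧ d = a ∧ ¬ a = b := by decide
lemma aldSym_swap : ∀ a b : Bool, ¬ a = b → aldSym 1 a b b a = 1 := by decide
lemma eSumOne : ∀ a b : Bool, ¬ a = b →
    ((if a = true ∧ b = false then 1 else 0) + (if b = true ∧ a = false then 1 else 0) : ℕ) = 1 := by
  decide

def cnt {n : ℕ} (x : PW n) : ℕ := ∑ i, if x.1 i = true ∧ x.2 i = false then 1 else 0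

lemma diag_even {n : ℕ} {x : PW n} (h : x.1 = x.2) : Even (cnt x) := by
  have : cnt x = 0 := by
    rw [cnt]
    apply Finset.sum_eq_zero
    intro i _
    rw [if_neg]
    rintro ⟨h1, h2⟩
    rw [h] at h1
    rw [h1] at h2
    exact Bool.noConfusion h2
  rw [this]; exact Even.zero

lemma odd_cnt {n : ℕ} (x y : PW n) (i0 : Fin n)
    (hoff : ∀ i, i ≠ i0 → x.1 i = y.1 i ∧ x.2 i = y.2 i)
    (h1 : y.1 i0 = x.2 i0) (h2 : y.2 i0 = x.1 i0) (hne : ¬ x.1 i0 = x.2 i0) :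
    ¬ (Even (cnt x) ↔ Even (cnt y)) := by
  have key : cnt x + cnt y =
      ((if x.1 i0 = true ∧ x.2 i0 = false then 1 else 0)
        + (if y.1 i0 = true ∧ y.2 i0 = false then 1 else 0))
      + ∑ i ∈ univ.erase i0,
          ((if x.1 i = true ∧ x.2 i = false then 1 else 0)
            + (if y.1 i = true ∧ y.2 i = false then 1 else 0)) := by
    rw [cnt, cnt, ← Finset.sum_add_distrib, ← Finset.add_sum_erase _ _ (mem_univ i0)]
  have h3 : (if x.1 i0 = true ∧ x.2 i0 = false then 1 else 0)
      + (if y.1 i0 = true ∧ y.2 i0 = false then (1 : ℕ) else 0) = 1 := by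
    rw [h1, h2]
    exact eSumOne _ _ hne
  have h4 : ∑ i ∈ univ.erase i0,
      ((if x.1 i = true ∧ x.2 i = false then 1 else 0)
        + (if y.1 i = true ∧ y.2 i = false then (1:ℕ) else 0))
      = 2 * ∑ i ∈ univ.erase i0, (if x.1 i = true ∧ x.2 i = false then 1 else 0) := by
    rw [Finset.mul_sum]
    apply Finset.sum_congr rfl
    intro i hi
    obtain ⟨ha, hb⟩ := hoff i (Finset.mem_erase.mp hi).1
    rw [← ha, ← hb]
    ring
  rw [h3, h4] at key
  simp only [Nat.even_iff]
  omega

lemma ALD_single {n : ℕ} (x y : PW n) (i0 : Fin n)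
    (hoff : ∀ i, i ≠ i0 → x.1 i = y.1 i ∧ x.2 i = y.2 i) :
    ALD 1 n x y = aldSym 1 (x.1 i0) (x.2 i0) (y.1 i0) (y.2 i0) := by
  rw [ALD]
  apply Finset.sum_eq_single_of_mem i0 (mem_univ i0)
  intro i _ hi
  obtain ⟨ha, hb⟩ := hoff i hi
  rw [ha, hb, aldSym_self]

def Dset {n : ℕ} (x : PW n) : Finset (Fin n) := univ.filter fun i => ¬ x.1 i = x.2 i

lemma dset_nonempty {n : ℕ} {x : PW n} (h : ¬ x.1 = x.2) : (Dset x).Nonempty := by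
  have h' : x.1 ≠ x.2 := h
  rw [Function.ne_iff] at h'
  obtain ⟨i, hi⟩ := h'
  exact ⟨i, by simp [Dset, hi]⟩

def sig {n : ℕ} (x : PW n) : PW n :=
  if h : x.1 = x.2 then x else
    let i := (Dset x).min' (dset_nonempty h)
    (Function.update x.1 i (x.2 i), Function.update x.2 i (x.1 i))

lemma sig_apply {n : ℕ} {x : PW n} (h : ¬ x.1 = x.2) :
    sig x = (Function.update x.1 ((Dset x).min' (dset_nonempty h))
              (x.2 ((Dset x).min' (dset_nonempty h))),
             Function.update x.2 ((Dset x).min' (dset_nonempty h))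
              (x.1 ((Dset x).min' (dset_nonempty h)))) := by
  rw [sig, dif_neg h]

lemma min'_ne {n : ℕ} {x : PW n} (h : ¬ x.1 = x.2) :
    ¬ x.1 ((Dset x).min' (dset_nonempty h)) = x.2 ((Dset x).min' (dset_nonempty h)) := by
  have := Finset.min'_mem (Dset x) (dset_nonempty h)
  simpa [Dset] using this

lemma Dset_sig {n : ℕ} {x : PW n} (h : ¬ x.1 = x.2) : Dset (sig x) = Dset x := by
  set j := (Dset x).min' (dset_nonempty h) with hj
  ext i
  simp only [Dset, mem_filter, mem_univ, true_and]
  rw [sig_apply h]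
  by_cases hij : i = j
  · subst hij
    simp only [← hj, Function.update_self]
    exact not_congr eq_comm
  · simp only [← hj, Function.update_of_ne hij]

lemma sig_ne_diag {n : ℕ} {x : PW n} (h : ¬ x.1 = x.2) : ¬ (sig x).1 = (sig x).2 := by
  intro heq
  have hne := dset_nonempty h
  rw [← Dset_sig h] at hne
  obtain ⟨i, hi⟩ := hne
  simp [Dset, heq] at hi

lemma min'_congr {α : Type*} [LinearOrder α] {s t : Finset α} (h : s = t) (hs : s.Nonempty) :
    s.min' hs = t.min' (h ▸ hs) := by subst h; rfl

lemma sig_sig {n : ℕ} {x : PW n} (h : ¬ x.1 = x.2) : sig (sig x) = x := by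
  have h2 := sig_ne_diag h
  have hmin : (Dset (sig x)).min' (dset_nonempty h2) = (Dset x).min' (dset_nonempty h) :=
    min'_congr (Dset_sig h) _
  rw [sig_apply h2, hmin, sig_apply h]
  set j := (Dset x).min' (dset_nonempty h)
  simp only [Function.update_self, Function.update_idem, Function.update_eq_self]

lemma sig_ne {n : ℕ} {x : PW n} (h : ¬ x.1 = x.2) : ¬ sig x = x := by
  intro heq
  set j := (Dset x).min' (dset_nonempty h) with hj
  have h1 : (sig x).1 j = x.2 j := by rw [sig_apply h]; simp [← hj, Function.update_self]
  rw [heq] at h1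
  exact min'_ne h h1

lemma sig_off {n : ℕ} {x : PW n} (h : ¬ x.1 = x.2) :
    ∀ i, i ≠ (Dset x).min' (dset_nonempty h) → x.1 i = (sig x).1 i ∧ x.2 i = (sig x).2 i := by
  intro i hi
  rw [sig_apply h]
  simp [Function.update_of_ne hi]

lemma sig_at {n : ℕ} {x : PW n} (h : ¬ x.1 = x.2) :
    (sig x).1 ((Dset x).min' (dset_nonempty h)) = x.2 ((Dset x).min' (dset_nonempty h)) ∧
    (sig x).2 ((Dset x).min' (dset_nonempty h)) = x.1 ((Dset x).min' (dset_nonempty h)) := by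
  rw [sig_apply h]
  simp [Function.update_self]

lemma ALD_sig {n : ℕ} {x : PW n} (h : ¬ x.1 = x.2) : ALD 1 n x (sig x) = 1 := by
  set j := (Dset x).min' (dset_nonempty h) with hj
  rw [ALD_single x (sig x) j (sig_off h)]
  rw [(sig_at h).1, (sig_at h).2]
  exact aldSym_swap _ _ (min'_ne h)

lemma parity_sig {n : ℕ} {x : PW n} (h : ¬ x.1 = x.2) :
    ¬ (Even (cnt x) ↔ Even (cnt (sig x))) := by
  set j := (Dset x).min' (dset_nonempty h) with hj
  exact odd_cnt x (sig x) j
    (fun i hi => sig_off h i hi) (sig_at h).1 (sig_at h).2 (min'_ne h)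

lemma card_univ_PW (n : ℕ) : (univ : Finset (PW n)).card = 2 ^ (2 * n) := by
  have : 2 ^ (2 * n) = 2 ^ n * 2 ^ n := by rw [← pow_add]; congr 1; omega
  rw [this]
  simp [Finset.card_univ, Fintype.card_prod, Fintype.card_fun]

lemma card_diag (n : ℕ) : ((univ : Finset (PW n)).filter fun x => x.1 = x.2).card = 2 ^ n := by
  have himg : ((univ : Finset (PW n)).filter fun x => x.1 = x.2)
      = Finset.image (fun a : Fin n → Bool => (a, a)) univ := by
    ext ⟨u, v⟩
    simp only [mem_filter, mem_univ, true_and, Finset.mem_image, Prod.mk.injEq]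
    constructor
    · intro h; exact ⟨u, rfl, h⟩
    · rintro ⟨a, rfl, rfl⟩; rfl
  rw [himg, Finset.card_image_of_injective _ (fun a b hab => ((Prod.mk.injEq _ _ _ _).mp hab).1)]
  simp [Finset.card_univ, Fintype.card_fun]

theorem ald_dist_two_optimal (n : ℕ) (hn : 1 ≤ n) :
    (∀ C : Finset ((Fin n → Bool) × (Fin n → Bool)),
      (∀ x ∈ C, ∀ y ∈ C, x ≠ y → (2 : ℤ) ≤ ALD 1 n x y) →
      C.card ≤ 2 ^ (2 * n - 1) + 2 ^ (n - 1)) ∧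
    (∃ C : Finset ((Fin n → Bool) × (Fin n → Bool)),
      (∀ x ∈ C, ∀ y ∈ C, x ≠ y → (2 : ℤ) ≤ ALD 1 n x y) ∧
      C.card = 2 ^ (2 * n - 1) + 2 ^ (n - 1)) := by
  have e1 : 2 ^ (2 * n - 1) * 2 = 2 ^ (2 * n) := by
    rw [← pow_succ]
    congr 1
    omega
  have e2 : 2 ^ (n - 1) * 2 = 2 ^ n := by
    rw [← pow_succ]
    congr 1
    omega
  have hSneCard : ((univ : Finset (PW n)).filter fun x => ¬ x.1 = x.2).card
      = 2 ^ (2 * n) - 2 ^ n := by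
    have := Finset.card_filter_add_card_filter_not
      (s := (univ : Finset (PW n))) (p := fun x => x.1 = x.2)
    rw [card_univ_PW n, card_diag n] at this
    omega
  constructor
  · -- upper bound
    intro C hC
    have hd : (C.filter fun x => x.1 = x.2).card ≤ 2 ^ n := by
      rw [← card_diag n]
      exact Finset.card_le_card (Finset.filter_subset_filter _ (Finset.subset_univ C))
    set Cne := C.filter fun x => ¬ x.1 = x.2 with hCne
    have hCneSne : Cne ⊆ (univ : Finset (PW n)).filter fun x => ¬ x.1 = x.2 :=
      Finset.filter_subset_filter _ (Finset.subset_univ C)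
    have himg : Cne.image sig ⊆ (univ : Finset (PW n)).filter fun x => ¬ x.1 = x.2 := by
      intro y hy
      obtain ⟨x, hx, rfl⟩ := Finset.mem_image.mp hy
      have hx2 : ¬ x.1 = x.2 := (mem_filter.mp hx).2
      simp [sig_ne_diag hx2]
    have hdisj : Disjoint Cne (Cne.image sig) := by
      rw [Finset.disjoint_left]
      intro y hy hy'
      obtain ⟨x, hx, rfl⟩ := Finset.mem_image.mp hy'
      have hx2 : ¬ x.1 = x.2 := (mem_filter.mp hx).2
      have hxc : x ∈ C := (mem_filter.mp hx).1
      have hyc : sig x ∈ C := (mem_filter.mp hy).1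
      have hne : x ≠ sig x := fun e => sig_ne hx2 e.symm
      have h2 := hC x hxc (sig x) hyc hne
      rw [ALD_sig hx2] at h2
      omega
    have hinj : Set.InjOn sig (Cne : Set (PW n)) := by
      intro a ha b hb hab
      have ha2 : ¬ a.1 = a.2 := (mem_filter.mp ha).2
      have hb2 : ¬ b.1 = b.2 := (mem_filter.mp hb).2
      calc a = sig (sig a) := (sig_sig ha2).symm
        _ = sig (sig b) := by rw [hab]
        _ = b := sig_sig hb2
    have hcardimg : (Cne.image sig).card = Cne.card := Finset.card_image_of_injOn hinj
    have hun : Cne.card + Cne.card ≤ 2 ^ (2 * n) - 2 ^ n := by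
      rw [← hSneCard]
      calc Cne.card + Cne.card = Cne.card + (Cne.image sig).card := by rw [hcardimg]
        _ = (Cne ∪ Cne.image sig).card := (Finset.card_union_of_disjoint hdisj).symm
        _ ≤ _ := Finset.card_le_card (Finset.union_subset hCneSne himg)
    have hpow : 1 ≤ 2 ^ n := Nat.one_le_two_pow
    have hpown : 2 ^ n ≤ 2 ^ (2 * n) := Nat.pow_le_pow_right (by norm_num) (by omega)
    have hCsplit : (C.filter fun x => x.1 = x.2).card + Cne.card = C.card := by
      rw [hCne]
      exact Finset.card_filter_add_card_filter_not _
    omega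
  · -- construction
    refine ⟨univ.filter fun x => Even (cnt x), ?_, ?_⟩
    · intro x hx y hy hxy
      have hxe : Even (cnt x) := (mem_filter.mp hx).2
      have hye : Even (cnt y) := (mem_filter.mp hy).2
      set D : Finset (Fin n) := univ.filter (fun i => ¬ (x.1 i = y.1 i ∧ x.2 i = y.2 i)) with hD
      have hDne : D.Nonempty := by
        by_contra hemp
        apply hxy
        have hall : ∀ i, x.1 i = y.1 i ∧ x.2 i = y.2 i := by
          intro i
          by_contra hcon
          exact hemp ⟨i, mem_filter.mpr ⟨mem_univ _, hcon⟩⟩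
        exact Prod.ext (funext fun i => (hall i).1) (funext fun i => (hall i).2)
      have hlow : (D.card : ℤ) ≤ ALD 1 n x y := by
        rw [ALD]
        calc (D.card : ℤ) = ∑ _i ∈ D, (1 : ℤ) := by simp
          _ ≤ ∑ i ∈ D, aldSym 1 (x.1 i) (x.2 i) (y.1 i) (y.2 i) := by
              apply Finset.sum_le_sum
              intro i hi
              exact aldSym_pos _ _ _ _ (mem_filter.mp hi).2
          _ ≤ ∑ i, aldSym 1 (x.1 i) (x.2 i) (y.1 i) (y.2 i) :=
              Finset.sum_le_sum_of_subset_of_nonneg (Finset.subset_univ D)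
                (fun i _ _ => aldSym_nonneg _ _ _ _)
      by_cases h2 : 2 ≤ D.card
      · have : (2 : ℤ) ≤ (D.card : ℤ) := by exact_mod_cast h2
        omega
      · have hc1 : D.card = 1 := by
          have := Finset.card_pos.mpr hDne
          omega
        obtain ⟨i0, hD1⟩ := Finset.card_eq_one.mp hc1
        have hoff : ∀ i, i ≠ i0 → x.1 i = y.1 i ∧ x.2 i = y.2 i := by
          intro i hi
          by_contra hcon
          have : i ∈ D := mem_filter.mpr ⟨mem_univ _, hcon⟩
          rw [hD1] at this
          exact hi (Finset.mem_singleton.mp this)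
        have hi0 : ¬ (x.1 i0 = y.1 i0 ∧ x.2 i0 = y.2 i0) := by
          have : i0 ∈ D := hD1 ▸ Finset.mem_singleton_self i0
          exact (mem_filter.mp this).2
        have hALD : ALD 1 n x y = aldSym 1 (x.1 i0) (x.2 i0) (y.1 i0) (y.2 i0) :=
          ALD_single x y i0 hoff
        rcases aldSym_cases (x.1 i0) (x.2 i0) (y.1 i0) (y.2 i0) with h0 | h1' | h2'
        · have := aldSym_pos _ _ _ _ hi0
          omega
        · obtain ⟨hc, hd', hne⟩ := aldSym_eq_one _ _ _ _ h1'
          exact absurd (iff_of_true hxe hye) (odd_cnt x y i0 hoff hc hd' hne)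
        · rw [hALD]
          exact h2'
    · -- cardinality
      set Ceven : Finset (PW n) := univ.filter fun x => Even (cnt x) with hCeven
      have hsplitC : (Ceven.filter fun x => x.1 = x.2).card
          + (Ceven.filter fun x => ¬ x.1 = x.2).card = Ceven.card :=
        Finset.card_filter_add_card_filter_not _
      have hAeq : Ceven.filter (fun x => x.1 = x.2)
          = (univ : Finset (PW n)).filter fun x => x.1 = x.2 := by
        ext x
        simp only [hCeven, Finset.filter_filter, mem_filter, mem_univ, true_and]
        constructor
        · rintro ⟨_, h⟩; exact h
        · intro h; exact ⟨diag_even h, h⟩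
      set Sne : Finset (PW n) := (univ : Finset (PW n)).filter fun x => ¬ x.1 = x.2 with hSne
      have hBeq : Ceven.filter (fun x => ¬ x.1 = x.2)
          = Sne.filter fun x => Even (cnt x) := by
        ext x
        simp only [hCeven, hSne, Finset.filter_filter, mem_filter, mem_univ, true_and]
        tauto
      set A : Finset (PW n) := Sne.filter fun x => Even (cnt x) with hA
      set B : Finset (PW n) := Sne.filter fun x => ¬ Even (cnt x) with hB
      have hABsplit : A.card + B.card = Sne.card :=
        Finset.card_filter_add_card_filter_not _
      have hinjA : Set.InjOn sig (A : Set (PW n)) := by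
        intro a ha b hb hab
        have ha2 : ¬ a.1 = a.2 := by
          have := (mem_filter.mp ha).1
          rw [hSne] at this
          exact (mem_filter.mp this).2
        have hb2 : ¬ b.1 = b.2 := by
          have := (mem_filter.mp hb).1
          rw [hSne] at this
          exact (mem_filter.mp this).2
        calc a = sig (sig a) := (sig_sig ha2).symm
          _ = sig (sig b) := by rw [hab]
          _ = b := sig_sig hb2
      have hinjB : Set.InjOn sig (B : Set (PW n)) := by
        intro a ha b hb hab
        have ha2 : ¬ a.1 = a.2 := by
          have := (mem_filter.mp ha).1
          rw [hSne] at this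
          exact (mem_filter.mp this).2
        have hb2 : ¬ b.1 = b.2 := by
          have := (mem_filter.mp hb).1
          rw [hSne] at this
          exact (mem_filter.mp this).2
        calc a = sig (sig a) := (sig_sig ha2).symm
          _ = sig (sig b) := by rw [hab]
          _ = b := sig_sig hb2
      have hAB : A.card ≤ B.card := by
        rw [← Finset.card_image_of_injOn hinjA]
        apply Finset.card_le_card
        intro y hy
        obtain ⟨x, hx, rfl⟩ := Finset.mem_image.mp hy
        have hmem := mem_filter.mp hx
        have hx2 : ¬ x.1 = x.2 := by
          have := hmem.1
          rw [hSne] at this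
          exact (mem_filter.mp this).2
        have hxe : Even (cnt x) := hmem.2
        rw [hB]
        apply mem_filter.mpr
        refine ⟨?_, ?_⟩
        · rw [hSne]; exact mem_filter.mpr ⟨mem_univ _, sig_ne_diag hx2⟩
        · intro he
          exact parity_sig hx2 (iff_of_true hxe he)
      have hBA : B.card ≤ A.card := by
        rw [← Finset.card_image_of_injOn hinjB]
        apply Finset.card_le_card
        intro y hy
        obtain ⟨x, hx, rfl⟩ := Finset.mem_image.mp hy
        have hmem := mem_filter.mp hx
        have hx2 : ¬ x.1 = x.2 := by
          have := hmem.1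
          rw [hSne] at this
          exact (mem_filter.mp this).2
        have hxo : ¬ Even (cnt x) := hmem.2
        rw [hA]
        apply mem_filter.mpr
        refine ⟨?_, ?_⟩
        · rw [hSne]; exact mem_filter.mpr ⟨mem_univ _, sig_ne_diag hx2⟩
        · by_contra hno
          exact parity_sig hx2 (iff_of_false hxo hno)
      have hABeq : A.card = B.card := le_antisymm hAB hBA
      have hSneC : Sne.card = 2 ^ (2 * n) - 2 ^ n := hSneCard
      have hpow : 1 ≤ 2 ^ n := Nat.one_le_two_pow
      have hpown : 2 ^ n ≤ 2 ^ (2 * n) := Nat.pow_le_pow_right (by norm_num) (by omega)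
      rw [← hsplitC, hAeq, hBeq, card_diag n]
      omega
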